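/- Suppose κ_a > κ_e > 0, d, γ > 0, and define SS_low(τ) = (κ_a d γ/(κ_a - κ_e))[β/(1-β) - α/(1-α)] with α = e^{-κ_a τ}, β = e^{-κ_e τ}. Then SS_low is strictly decreasing in τ on (0, ∞) and tends to 0 as τ → ∞. -/

import Mathlib

open Real

-- sinh t < t * cosh t for t > 0
lemma sinh_lt_mul_cosh {t : ℝ} (ht : 0 < t) : Real.sinh t < t * Real.cosh t := by
  have key : StrictMonoOn (fun t : ℝ => t * Real.cosh t - Real.sinh t) (Set.Ici 0) := by
    apply strictMonoOn_of_deriv_pos (convex_Ici 0)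
    · fun_prop
    · intro x hx
      rw [interior_Ici] at hx
      have h1 : HasDerivAt (fun t : ℝ => t * Real.cosh t - Real.sinh t)
          (1 * Real.cosh x + x * Real.sinh x - Real.cosh x) x :=
        ((hasDerivAt_id x).mul (Real.hasDerivAt_cosh x)).sub (Real.hasDerivAt_sinh x)
      rw [h1.deriv]
      have hs := Real.sinh_pos_iff.2 hx
      have hx' : (0:ℝ) < x := hx
      nlinarith [mul_pos hx' hs]
  have := key (Set.self_mem_Ici) (Set.mem_Ici.2 ht.le) ht
  simp at this
  linarith

-- b sinh a < a sinh b
lemma sinh_div_mono {a b : ℝ} (ha : 0 < a) (hab : a < b) :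
    b * Real.sinh a < a * Real.sinh b := by
  have key : StrictMonoOn (fun t : ℝ => Real.sinh t / t) (Set.Ioi 0) := by
    apply strictMonoOn_of_deriv_pos (convex_Ioi 0)
    · apply ContinuousOn.div Real.continuous_sinh.continuousOn continuousOn_id
      intro x hx; exact ne_of_gt hx
    · intro x hx
      rw [interior_Ioi] at hx
      have h1 : HasDerivAt (fun t : ℝ => Real.sinh t / t)
          ((Real.cosh x * x - Real.sinh x * 1) / x ^ 2) x :=
        (Real.hasDerivAt_sinh x).div (hasDerivAt_id x) (ne_of_gt hx)
      rw [h1.deriv]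
      have h2 := sinh_lt_mul_cosh hx
      have hx2 : (0:ℝ) < x ^ 2 := pow_pos hx 2
      apply div_pos _ hx2
      nlinarith
  have := key (Set.mem_Ioi.2 ha) (Set.mem_Ioi.2 (ha.trans hab)) hab
  rw [div_lt_div_iff₀ ha (ha.trans hab)] at this
  linarith

lemma exp_sub_one_eq (u : ℝ) : Real.exp (2*u) - 1 = 2 * Real.exp u * Real.sinh u := by
  rw [Real.sinh_eq, Real.exp_neg]
  have h := Real.exp_pos u
  have h2 : Real.exp (2*u) = Real.exp u * Real.exp u := by
    rw [← Real.exp_add]; ring_nf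
  field_simp [h2]
  ring_nf
  rw [mul_comm u 2, h2, sq]

-- key: h(x) = x e^x/(e^x-1)^2 strictly decreasing
lemma key_ineq {x y : ℝ} (hx : 0 < x) (hxy : x < y) :
    y * Real.exp y * (Real.exp x - 1)^2 < x * Real.exp x * (Real.exp y - 1)^2 := by
  have hex : Real.exp x - 1 = 2 * Real.exp (x/2) * Real.sinh (x/2) := by
    have := exp_sub_one_eq (x/2); rw [← this]; ring_nf
  have hey : Real.exp y - 1 = 2 * Real.exp (y/2) * Real.sinh (y/2) := by
    have := exp_sub_one_eq (y/2); rw [← this]; ring_nf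
  have hx2 : Real.exp x = Real.exp (x/2) * Real.exp (x/2) := by
    rw [← Real.exp_add]; ring_nf
  have hy2 : Real.exp y = Real.exp (y/2) * Real.exp (y/2) := by
    rw [← Real.exp_add]; ring_nf
  rw [hex, hey, hx2, hy2]
  have hsx : 0 < Real.sinh (x/2) := Real.sinh_pos_iff.2 (by linarith)
  have hsy : Real.sinh (x/2) < Real.sinh (y/2) := Real.sinh_lt_sinh.2 (by linarith)
  have hmain : y * Real.sinh (x/2) ^ 2 < x * Real.sinh (y/2) ^ 2 := by
    have h1 : (y/2) * Real.sinh (x/2) < (x/2) * Real.sinh (y/2) :=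
      sinh_div_mono (by linarith) (by linarith)
    have h2 : (y/2) * Real.sinh (x/2) * Real.sinh (x/2) < (x/2) * Real.sinh (y/2) * Real.sinh (x/2) :=
      mul_lt_mul_of_pos_right h1 hsx
    have hsy0 : 0 < Real.sinh (y/2) := hsx.trans hsy
    have h3 : (x/2) * Real.sinh (y/2) * Real.sinh (x/2) < (x/2) * Real.sinh (y/2) * Real.sinh (y/2) :=
      mul_lt_mul_of_pos_left hsy (by positivity)
    nlinarith
  have hpx := Real.exp_pos (x/2)
  have hpy := Real.exp_pos (y/2)
  nlinarith [mul_pos hpx hpy, mul_pos (mul_pos hpx hpx) (mul_pos hpy hpy),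
    mul_lt_mul_of_pos_left hmain (mul_pos (mul_pos (mul_pos hpx hpx) (mul_pos hpy hpy)) (by norm_num : (0:ℝ) < 4))]

lemma frac_eq (k τ : ℝ) :
    Real.exp (-k * τ) / (1 - Real.exp (-k * τ)) = (Real.exp (k * τ) - 1)⁻¹ := by
  rw [neg_mul, Real.exp_neg]
  set E := Real.exp (k * τ) with hE
  have hE0 : 0 < E := Real.exp_pos _
  rcases eq_or_ne E 1 with h | h
  · simp [h]
  · have h1 : E - 1 ≠ 0 := sub_ne_zero.2 h
    have h2 : 1 - E⁻¹ ≠ 0 := by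
      rw [sub_ne_zero]
      exact fun hh => h (by rw [← inv_inv E, ← hh, inv_one])
    field_simp

theorem SSlow_decreasing (κa κe d γ : ℝ) (h1 : κa > κe) (h2 : κe > 0)
    (hd : 0 < d) (hγ : 0 < γ) (SSlow : ℝ → ℝ)
    (hSS : ∀ τ : ℝ, SSlow τ =
      (κa * d * γ / (κa - κe)) *
        (Real.exp (-κe * τ) / (1 - Real.exp (-κe * τ)) -
         Real.exp (-κa * τ) / (1 - Real.exp (-κa * τ)))) :
    StrictAntiOn SSlow (Set.Ioi 0) ∧
    Filter.Tendsto SSlow Filter.atTop (nhds 0) := by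
  have hκa : 0 < κa := h2.trans h1
  set C := κa * d * γ / (κa - κe) with hCdef
  have hC : 0 < C := by
    apply div_pos (by positivity) (by linarith)
  have hfun : SSlow = fun τ => C * ((Real.exp (κe * τ) - 1)⁻¹ - (Real.exp (κa * τ) - 1)⁻¹) := by
    funext τ
    rw [hSS τ, frac_eq, frac_eq]
  constructor
  · rw [hfun]
    apply strictAntiOn_of_deriv_neg (convex_Ioi 0)
    · have hcont : ∀ k : ℝ, 0 < k → ContinuousOn
          (fun t : ℝ => (Real.exp (k * t) - 1)⁻¹) (Set.Ioi 0) := by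
        intro k hk
        apply ContinuousOn.inv₀
        · fun_prop
        · intro τ hτ
          have hτ0 : (0:ℝ) < τ := hτ
          have : (1:ℝ) < Real.exp (k * τ) := by
            rw [← Real.exp_zero]
            exact Real.exp_lt_exp.2 (by positivity)
          linarith
      exact continuousOn_const.mul ((hcont κe h2).sub (hcont κa hκa))
    · intro τ hτ
      rw [interior_Ioi] at hτ
      have hτ0 : (0:ℝ) < τ := hτ
      have hEe : 1 < Real.exp (κe * τ) := by
        rw [← Real.exp_zero]; exact Real.exp_lt_exp.2 (by positivity)
      have hEa : 1 < Real.exp (κa * τ) := by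
        rw [← Real.exp_zero]; exact Real.exp_lt_exp.2 (by positivity)
      have hde : ∀ k : ℝ, 1 < Real.exp (k * τ) →
          HasDerivAt (fun t => (Real.exp (k * t) - 1)⁻¹)
            (-(Real.exp (k * τ) * k) / (Real.exp (k * τ) - 1) ^ 2) τ := by
        intro k hk
        have hd1 : HasDerivAt (fun t : ℝ => k * t) k τ := by
          simpa using (hasDerivAt_id τ).const_mul k
        have hd2 := hd1.exp
        have hd3 := hd2.sub_const 1
        exact hd3.inv (by linarith)
      have hderiv : HasDerivAt
          (fun t => C * ((Real.exp (κe * t) - 1)⁻¹ - (Real.exp (κa * t) - 1)⁻¹))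
          (C * (-(Real.exp (κe * τ) * κe) / (Real.exp (κe * τ) - 1) ^ 2 -
               -(Real.exp (κa * τ) * κa) / (Real.exp (κa * τ) - 1) ^ 2)) τ :=
        ((hde κe hEe).sub (hde κa hEa)).const_mul C
      rw [hderiv.deriv]
      apply mul_neg_of_pos_of_neg hC
      rw [sub_neg]
      have key := key_ineq (x := κe * τ) (y := κa * τ) (by positivity)
        (by apply mul_lt_mul_of_pos_right h1 hτ0)
      set Ee := Real.exp (κe * τ)
      set Ea := Real.exp (κa * τ)
      have hpe : (0:ℝ) < (Ee - 1) ^ 2 := pow_pos (by linarith) 2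
      have hpa : (0:ℝ) < (Ea - 1) ^ 2 := pow_pos (by linarith) 2
      rw [div_lt_div_iff₀ hpe hpa]
      nlinarith [key, hτ0]
  · have hSSlow : SSlow = fun τ => C *
        (Real.exp (-κe * τ) / (1 - Real.exp (-κe * τ)) -
         Real.exp (-κa * τ) / (1 - Real.exp (-κa * τ))) := funext hSS
    rw [hSSlow]
    have hlim : ∀ k : ℝ, 0 < k → Filter.Tendsto
        (fun τ => Real.exp (-k * τ) / (1 - Real.exp (-k * τ))) Filter.atTop (nhds 0) := by
      intro k hk
      have h0 : Filter.Tendsto (fun τ : ℝ => -k * τ) Filter.atTop Filter.atBot :=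
        (Filter.tendsto_const_mul_atBot_of_neg (by linarith)).2 Filter.tendsto_id
      have he : Filter.Tendsto (fun τ : ℝ => Real.exp (-k * τ)) Filter.atTop (nhds 0) :=
        Real.tendsto_exp_atBot.comp h0
      have hden : Filter.Tendsto (fun τ : ℝ => 1 - Real.exp (-k * τ)) Filter.atTop (nhds 1) := by
        simpa using tendsto_const_nhds.sub he
      simpa [Pi.div_def] using he.div hden one_ne_zero
    have := ((hlim κe h2).sub (hlim κa hκa)).const_mul C
    simpa using this
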